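/- Let u and v be nonadjacent vertices of a graph G. If k ≥ 5 and G_{u,v,k} is obtained by adding a path with k internal vertices between u and v, then γ(G_{u,v,k}) > γ(G). -/

import Mathlib

/-- `D` is a dominating set of `G`: every vertex not in `D` has a neighbor in `D`. -/
def isDomSet {V : Type*} (G : SimpleGraph V) (D : Finset V) : Prop :=
  ∀ v, v ∉ D → ∃ u ∈ D, G.Adj u v

/-- The domination number: minimum cardinality of a dominating set. -/
noncomputable def domNum {V : Type*} (G : SimpleGraph V) : ℕ :=
  sInf {n | ∃ D : Finset V, D.card = n ∧ isDomSet G D}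

/-- The `(u,v)`-path-addition graph `G_{u,v,k}`: add an internally disjoint path with
`k` internal vertices between `u` and `v`. -/
noncomputable def pathAdd {V : Type*} (G : SimpleGraph V) (u v : V) (k : ℕ) :
    SimpleGraph (V ⊕ Fin k) :=
  SimpleGraph.fromRel (fun a b =>
    match a, b with
    | Sum.inl x, Sum.inl y => G.Adj x y
    | Sum.inl x, Sum.inr i => (x = u ∧ (i : ℕ) = 0) ∨ (x = v ∧ (i : ℕ) = k - 1)
    | Sum.inr _, Sum.inl _ => False
    | Sum.inr i, Sum.inr j => (j : ℕ) = (i : ℕ) + 1)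

lemma adj_inl_inl {V : Type*} (G : SimpleGraph V) (u v : V) (k : ℕ) (x y : V) :
    (pathAdd G u v k).Adj (Sum.inl x) (Sum.inl y) ↔ G.Adj x y := by
  simp only [pathAdd, SimpleGraph.fromRel_adj]
  constructor
  · rintro ⟨hne, h | h⟩
    · exact h
    · exact h.symm
  · intro h; exact ⟨fun e => G.loopless.irrefl _ ((Sum.inl.injEq _ _ ▸ e : x = y) ▸ h), Or.inl h⟩

lemma adj_inr_inl {V : Type*} (G : SimpleGraph V) (u v : V) (k : ℕ) (x : V) (i : Fin k) :
    (pathAdd G u v k).Adj (Sum.inr i) (Sum.inl x) ↔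
      ((x = u ∧ (i : ℕ) = 0) ∨ (x = v ∧ (i : ℕ) = k - 1)) := by
  simp [pathAdd, SimpleGraph.fromRel_adj]

lemma adj_inr_inr {V : Type*} (G : SimpleGraph V) (u v : V) (k : ℕ) (i j : Fin k) :
    (pathAdd G u v k).Adj (Sum.inr i) (Sum.inr j) ↔
      i ≠ j ∧ ((j : ℕ) = (i : ℕ) + 1 ∨ (i : ℕ) = (j : ℕ) + 1) := by
  simp [pathAdd, SimpleGraph.fromRel_adj]

theorem stmt18 {V : Type*} [Fintype V] (G : SimpleGraph V) (u v : V)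
    (hne : u ≠ v) (h : ¬G.Adj u v) (k : ℕ) (hk : 5 ≤ k) :
    domNum G < domNum (pathAdd G u v k) := by
  classical
  set G' := pathAdd G u v k with hG'
  have hne' : ({n | ∃ D : Finset (V ⊕ Fin k), D.card = n ∧ isDomSet G' D}).Nonempty :=
    ⟨(Finset.univ).card, Finset.univ, rfl, fun w hw => absurd (Finset.mem_univ w) hw⟩
  obtain ⟨D', hDcard, hDdom⟩ := Nat.sInf_mem hne'
  set DV : Finset V := D'.preimage Sum.inl (Sum.inl_injective.injOn) with hDVdef
  set P : Finset (Fin k) := D'.preimage Sum.inr (Sum.inr_injective.injOn) with hPdef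
  have memDV : ∀ x, x ∈ DV ↔ Sum.inl x ∈ D' := fun x => Finset.mem_preimage
  have memP : ∀ i, i ∈ P ↔ Sum.inr i ∈ D' := fun i => Finset.mem_preimage
  have hsplit : D'.card = DV.card + P.card := by
    have hU : D' = DV.image Sum.inl ∪ P.image Sum.inr := by
      ext z
      cases z with
      | inl x => simp [memDV x]
      | inr i => simp [memP i]
    rw [hU, Finset.card_union_of_disjoint, Finset.card_image_of_injective _ Sum.inl_injective,
      Finset.card_image_of_injective _ Sum.inr_injective]
    simp [Finset.disjoint_left]
  -- middle witness
  have i2 : Fin k := ⟨2, by omega⟩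
  obtain ⟨m, hm13, hmP⟩ : ∃ m : Fin k,
      ((m:ℕ) = 1 ∨ (m:ℕ) = 2 ∨ (m:ℕ) = 3) ∧ m ∈ P := by
    by_cases h2 : Sum.inr (⟨2, by omega⟩ : Fin k) ∈ D'
    · exact ⟨⟨2, by omega⟩, by simp, (memP _).2 h2⟩
    · obtain ⟨z, hz, hadj⟩ := hDdom _ h2
      match z with
      | Sum.inl x =>
          rw [hG'] at hadj
          rw [show (Sum.inl x : V ⊕ Fin k) = Sum.inl x from rfl] at hadj
          have := ((pathAdd G u v k).adj_symm hadj)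
          rw [adj_inr_inl] at this
          simp only [] at this
          omega
      | Sum.inr j =>
          rw [hG', adj_inr_inr] at hadj
          refine ⟨j, ?_, (memP _).2 hz⟩
          simp only [] at hadj
          omega
  -- whether u, v are dominated inside G by DV
  set bu : Prop := u ∈ DV ∨ ∃ y ∈ DV, G.Adj y u with hbu_def
  set bv : Prop := v ∈ DV ∨ ∃ y ∈ DV, G.Adj y v with hbv_def
  have hu0 : ¬bu → (⟨0, by omega⟩ : Fin k) ∈ P := by
    intro hbu
    have huD : Sum.inl u ∉ D' := fun hh => hbu (Or.inl ((memDV u).2 hh))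
    obtain ⟨z, hz, hadj⟩ := hDdom _ huD
    match z with
    | Sum.inl y =>
        rw [hG', adj_inl_inl] at hadj
        exact absurd (Or.inr ⟨y, (memDV y).2 hz, hadj⟩) hbu
    | Sum.inr i =>
        rw [hG', adj_inr_inl] at hadj
        rcases hadj with ⟨_, hi⟩ | ⟨hv, _⟩
        · have : i = (⟨0, by omega⟩ : Fin k) := Fin.ext hi
          exact this ▸ (memP i).2 hz
        · exact absurd hv hne
  have hvk : ¬bv → (⟨k - 1, by omega⟩ : Fin k) ∈ P := by
    intro hbv
    have hvD : Sum.inl v ∉ D' := fun hh => hbv (Or.inl ((memDV v).2 hh))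
    obtain ⟨z, hz, hadj⟩ := hDdom _ hvD
    match z with
    | Sum.inl y =>
        rw [hG', adj_inl_inl] at hadj
        exact absurd (Or.inr ⟨y, (memDV y).2 hz, hadj⟩) hbv
    | Sum.inr i =>
        rw [hG', adj_inr_inl] at hadj
        rcases hadj with ⟨hv, _⟩ | ⟨_, hi⟩
        · exact absurd hv.symm hne
        · have : i = (⟨k - 1, by omega⟩ : Fin k) := Fin.ext hi
          exact this ▸ (memP i).2 hz
  -- the dominating set of G
  set E : Finset V := (DV ∪ (if bu then ∅ else {u})) ∪ (if bv then ∅ else {v}) with hEdef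
  have hDVsub : DV ⊆ E := by
    intro x hx
    exact Finset.mem_union_left _ (Finset.mem_union_left _ hx)
  have hEdom : isDomSet G E := by
    intro w hw
    have hwDV : w ∉ DV := fun hh => hw (hDVsub hh)
    by_cases hwu : w = u
    · subst hwu
      by_cases hb : bu
      · rcases hb with hb | ⟨y, hy, hadj⟩
        · exact absurd hb hwDV
        · exact ⟨y, hDVsub hy, hadj⟩
      · exact absurd (Finset.mem_union_left _ (Finset.mem_union_right _ (by simp [hb]))) hw
    by_cases hwv : w = v
    · subst hwv
      by_cases hb : bv
      · rcases hb with hb | ⟨y, hy, hadj⟩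
        · exact absurd hb hwDV
        · exact ⟨y, hDVsub hy, hadj⟩
      · exact absurd (Finset.mem_union_right _ (by simp [hb])) hw
    · have hwD : Sum.inl w ∉ D' := fun hh => hwDV ((memDV w).2 hh)
      obtain ⟨z, hz, hadj⟩ := hDdom _ hwD
      match z with
      | Sum.inl y =>
          rw [hG', adj_inl_inl] at hadj
          exact ⟨y, hDVsub ((memDV y).2 hz), hadj⟩
      | Sum.inr i =>
          rw [hG', adj_inr_inl] at hadj
          rcases hadj with ⟨hwu', _⟩ | ⟨hwv', _⟩
          · exact absurd hwu' hwu
          · exact absurd hwv' hwv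
  have hE : domNum G ≤ E.card := Nat.sInf_le ⟨E, rfl, hEdom⟩
  have hEcard : E.card ≤ DV.card + ((if bu then 0 else 1) + (if bv then 0 else 1)) := by
    calc E.card ≤ (DV ∪ (if bu then ∅ else {u})).card + (if bv then ∅ else ({v} : Finset V)).card :=
          Finset.card_union_le _ _
      _ ≤ (DV.card + (if bu then ∅ else ({u} : Finset V)).card)
            + (if bv then ∅ else ({v} : Finset V)).card :=
          Nat.add_le_add_right (Finset.card_union_le _ _) _
      _ ≤ DV.card + ((if bu then 0 else 1) + (if bv then 0 else 1)) := by
          by_cases hb : bu <;> by_cases hb' : bv <;> simp [hb, hb']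
  have hPcard : (if bu then 0 else 1) + (if bv then 0 else 1) < P.card := by
    by_cases hb : bu <;> by_cases hb' : bv <;> simp only [hb, hb', if_pos, if_neg,
      not_false_iff, Nat.add_zero, Nat.zero_add, if_true, if_false]
    · exact Finset.card_pos.2 ⟨m, hmP⟩
    · refine Finset.one_lt_card.2 ⟨m, hmP, ⟨k - 1, by omega⟩, hvk hb', ?_⟩
      intro e
      have := congrArg Fin.val e
      simp only [] at this
      omega
    · refine Finset.one_lt_card.2 ⟨m, hmP, ⟨0, by omega⟩, hu0 hb, ?_⟩
      intro e
      have := congrArg Fin.val e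
      simp only [] at this
      omega
    · have h3 : ({(⟨0, by omega⟩ : Fin k), ⟨k - 1, by omega⟩, m} : Finset (Fin k)) ⊆ P := by
        intro x hx
        simp only [Finset.mem_insert, Finset.mem_singleton] at hx
        rcases hx with rfl | rfl | rfl
        · exact hu0 hb
        · exact hvk hb'
        · exact hmP
      have hc3 : ({(⟨0, by omega⟩ : Fin k), ⟨k - 1, by omega⟩, m} : Finset (Fin k)).card = 3 := by
        rw [Finset.card_insert_of_notMem, Finset.card_insert_of_notMem,
          Finset.card_singleton]
        · intro e
          simp only [Finset.mem_singleton] at e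
          have := congrArg Fin.val e
          simp only [] at this
          omega
        · intro e
          simp only [Finset.mem_insert, Finset.mem_singleton] at e
          rcases e with e | e <;>
          · have := congrArg Fin.val e
            simp only [] at this
            omega
      have := Finset.card_le_card h3
      omega
  have hfin : D'.card = domNum G' := hDcard
  omega
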